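/- Let S₁ and S₂ be unitary commutative semirings (commutative semirings with a multiplicative unit 1). Then every ideal of S₁ × S₂ is directly decomposable. -/
import Mathlib


/-- An ideal of a (possibly non-unital) commutative semiring. -/
def IsSemiringIdeal {S : Type*} [NonUnitalCommSemiring S] (I : Set S) : Prop :=
  (0 : S) ∈ I ∧ (∀ a b : S, a ∈ I → b ∈ I → a + b ∈ I) ∧ (∀ a s : S, a ∈ I → a * s ∈ I)

theorem stmt_4 {S₁ S₂ : Type*} [CommSemiring S₁] [CommSemiring S₂]
    (I : Set (S₁ × S₂)) (hI : IsSemiringIdeal I) :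
    ∃ I₁ : Set S₁, ∃ I₂ : Set S₂,
      IsSemiringIdeal I₁ ∧ IsSemiringIdeal I₂ ∧ I = I₁ ×ˢ I₂ := by
  obtain ⟨h0, hadd, hmul⟩ := hI
  refine ⟨Prod.fst '' I, Prod.snd '' I, ⟨⟨(0,0), h0, rfl⟩, ?_, ?_⟩,
    ⟨⟨(0,0), h0, rfl⟩, ?_, ?_⟩, ?_⟩
  · rintro a b ⟨x, hx, rfl⟩ ⟨y, hy, rfl⟩
    exact ⟨x + y, hadd _ _ hx hy, rfl⟩
  · rintro a s ⟨x, hx, rfl⟩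
    exact ⟨x * (s, 0), hmul _ _ hx, rfl⟩
  · rintro a b ⟨x, hx, rfl⟩ ⟨y, hy, rfl⟩
    exact ⟨x + y, hadd _ _ hx hy, rfl⟩
  · rintro a s ⟨x, hx, rfl⟩
    exact ⟨x * (0, s), hmul _ _ hx, rfl⟩
  · ext ⟨a, b⟩
    constructor
    · intro h
      exact ⟨⟨(a, b), h, rfl⟩, ⟨(a, b), h, rfl⟩⟩
    · rintro ⟨⟨⟨x1, x2⟩, hx, rfl⟩, ⟨⟨y1, y2⟩, hy, h2⟩⟩
      dsimp at h2; subst h2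
      have := hadd _ _ (hmul _ ((1 : S₁), (0 : S₂)) hx) (hmul _ ((0 : S₁), (1 : S₂)) hy)
      simpa using this
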